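/- arXiv:gr-qc/9712049 — 3 statements merged into one kernel-verified Lean document; each statement's English description precedes it below -/
import Mathlib

section
/- Let N ≥ 2 and let M be the (N-1)×(N-1) real symmetric tridiagonal matrix with diagonal entries M_{jj} = 2j(N-j) and off-diagonal entries M_{j,j+1} = M_{j+1,j} = -√(j(j+1)(N-j)(N-j-1)) for j = 1,…,N-2. Then for every vector q ∈ ℝ^{N-1}, setting p_j = √(j(N-j))·q_j, one has qᵀMq = p_1² + p_{N-1}² + Σ_{j=1}^{N-2}(p_j - p_{j+1})². -/
open Matrix

private lemma shift1 (n : ℕ) (c : Fin (n+1) → Fin (n+1) → ℝ) :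
    ∑ i : Fin (n+1), ∑ j : Fin (n+1), (if (i : ℕ) + 1 = (j : ℕ) then c i j else 0) =
      ∑ k : Fin n, c k.castSucc k.succ := by
  rw [Fin.sum_univ_castSucc]
  have hlast : ∑ j : Fin (n+1),
      (if ((Fin.last n : Fin (n+1)) : ℕ) + 1 = (j : ℕ) then c (Fin.last n) j else 0) = 0 := by
    apply Finset.sum_eq_zero
    intro j _
    have hj : (j : ℕ) ≤ n := Fin.is_le j
    rw [if_neg]
    simp only [Fin.val_last]
    omega
  rw [hlast, add_zero]
  apply Finset.sum_congr rfl
  intro k _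
  have : ∑ j : Fin (n+1),
      (if ((k.castSucc : Fin (n+1)) : ℕ) + 1 = (j : ℕ) then c k.castSucc j else 0) =
      ∑ j : Fin (n+1), (if k.succ = j then c k.castSucc j else 0) := by
    apply Finset.sum_congr rfl
    intro j _
    by_cases h : k.succ = j
    · subst h; simp
    · rw [if_neg h, if_neg]
      intro hc
      exact h (Fin.ext (by simpa using hc))
  rw [this, Finset.sum_ite_eq]
  simp

/-- quadratic form identity for the su(N) linearization matrix
(with N = n + 2, so the matrix is (N-1)×(N-1) = (n+1)×(n+1), indices shifted by one). -/
theorem stmt0 (n N : ℕ) (hN : N = n + 2)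
    (M : Matrix (Fin (n+1)) (Fin (n+1)) ℝ)
    (hdiag : ∀ i : Fin (n+1), M i i = 2 * ((i : ℝ) + 1) * ((N : ℝ) - (i : ℝ) - 1))
    (hoff1 : ∀ i : Fin n, M i.castSucc i.succ =
      -Real.sqrt (((i : ℝ) + 1) * ((i : ℝ) + 2) * ((N : ℝ) - (i : ℝ) - 1) * ((N : ℝ) - (i : ℝ) - 2)))
    (hoff2 : ∀ i : Fin n, M i.succ i.castSucc =
      -Real.sqrt (((i : ℝ) + 1) * ((i : ℝ) + 2) * ((N : ℝ) - (i : ℝ) - 1) * ((N : ℝ) - (i : ℝ) - 2)))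
    (hzero : ∀ i j : Fin (n+1), (i : ℕ) ≠ (j : ℕ) → (i : ℕ) + 1 ≠ (j : ℕ) →
      (j : ℕ) + 1 ≠ (i : ℕ) → M i j = 0)
    (q p : Fin (n+1) → ℝ)
    (hp : ∀ i : Fin (n+1), p i = Real.sqrt (((i : ℝ) + 1) * ((N : ℝ) - (i : ℝ) - 1)) * q i) :
    q ⬝ᵥ M.mulVec q =
      (p 0) ^ 2 + (p (Fin.last n)) ^ 2 + ∑ i : Fin n, (p i.castSucc - p i.succ) ^ 2 := by
  subst hN
  set a : Fin (n+1) → ℝ :=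
    fun i => Real.sqrt (((i : ℝ) + 1) * (((n+2 : ℕ) : ℝ) - (i : ℝ) - 1)) with ha
  have hnonneg : ∀ i : Fin (n+1), 0 ≤ ((i : ℝ) + 1) * (((n+2 : ℕ) : ℝ) - (i : ℝ) - 1) := by
    intro i
    have hi : (i : ℝ) ≤ n := by exact_mod_cast i.is_le
    push_cast
    nlinarith
  have ha2 : ∀ i : Fin (n+1), (a i) ^ 2 = ((i : ℝ) + 1) * (((n+2 : ℕ) : ℝ) - (i : ℝ) - 1) :=
    fun i => Real.sq_sqrt (hnonneg i)
  have hsqrt : ∀ k : Fin n,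
      Real.sqrt (((k : ℝ) + 1) * ((k : ℝ) + 2) * (((n+2 : ℕ) : ℝ) - (k : ℝ) - 1) *
        (((n+2 : ℕ) : ℝ) - (k : ℝ) - 2)) = a k.castSucc * a k.succ := by
    intro k
    have h1 : ((k.castSucc : Fin (n+1)) : ℝ) = (k : ℝ) := by simp
    have h2 : ((k.succ : Fin (n+1)) : ℝ) = (k : ℝ) + 1 := by simp
    have hnn : 0 ≤ ((k : ℝ) + 1) * (((n+2 : ℕ) : ℝ) - (k : ℝ) - 1) := by
      have hk : (k : ℝ) ≤ n := by
        have hk' : (k : ℕ) ≤ n := le_of_lt k.is_lt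
        exact_mod_cast hk'
      push_cast
      nlinarith
    simp only [ha, h1, h2]
    rw [← Real.sqrt_mul hnn]
    congr 1
    ring
  have key : ∀ i j : Fin (n+1), q i * (M i j * q j) =
      (if i = j then 2 * p i ^ 2 else 0) +
      ((if (i : ℕ) + 1 = (j : ℕ) then -(p i * p j) else 0) +
       (if (j : ℕ) + 1 = (i : ℕ) then -(p i * p j) else 0)) := by
    intro i j
    by_cases hij : i = j
    · subst hij
      rw [if_pos rfl, if_neg (show ¬((i : ℕ) + 1 = (i : ℕ)) by omega), hdiag, hp i]
      rw [mul_pow, Real.sq_sqrt (hnonneg i)]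
      ring
    · rw [if_neg hij]
      have hvij : (i : ℕ) ≠ (j : ℕ) := fun h => hij (Fin.ext h)
      by_cases h1 : (i : ℕ) + 1 = (j : ℕ)
      · rw [if_pos h1, if_neg (by omega)]
        have hklt : (i : ℕ) < n := by have := j.is_le; omega
        set k : Fin n := ⟨(i : ℕ), hklt⟩ with hk
        have hic : i = k.castSucc := Fin.ext (by simp [hk])
        have hjc : j = k.succ := Fin.ext (by simp [hk]; omega)
        rw [hic, hjc, hoff1 k, hsqrt k, hp k.castSucc, hp k.succ]
        ring
      · rw [if_neg h1]
        by_cases h2 : (j : ℕ) + 1 = (i : ℕ)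
        · rw [if_pos h2]
          have hklt : (j : ℕ) < n := by have := i.is_le; omega
          set k : Fin n := ⟨(j : ℕ), hklt⟩ with hk
          have hic : i = k.succ := Fin.ext (by simp [hk]; omega)
          have hjc : j = k.castSucc := Fin.ext (by simp [hk])
          rw [hic, hjc, hoff2 k, hsqrt k, hp k.castSucc, hp k.succ]
          ring
        · rw [if_neg h2, hzero i j hvij h1 h2]
          ring
  have hdot : q ⬝ᵥ M.mulVec q = ∑ i : Fin (n+1), ∑ j : Fin (n+1), q i * (M i j * q j) := by
    simp [dotProduct, mulVec, Finset.mul_sum]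
  rw [hdot]
  have hsplit : ∑ i : Fin (n+1), ∑ j : Fin (n+1), q i * (M i j * q j) =
      (∑ i : Fin (n+1), ∑ j : Fin (n+1), (if i = j then 2 * p i ^ 2 else 0)) +
      ((∑ i : Fin (n+1), ∑ j : Fin (n+1), (if (i : ℕ) + 1 = (j : ℕ) then -(p i * p j) else 0)) +
       (∑ i : Fin (n+1), ∑ j : Fin (n+1), (if (j : ℕ) + 1 = (i : ℕ) then -(p i * p j) else 0))) := by
    rw [← Finset.sum_add_distrib, ← Finset.sum_add_distrib]
    apply Finset.sum_congr rfl
    intro i _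
    rw [← Finset.sum_add_distrib, ← Finset.sum_add_distrib]
    exact Finset.sum_congr rfl fun j _ => key i j
  rw [hsplit]
  have hS1 : ∑ i : Fin (n+1), ∑ j : Fin (n+1), (if i = j then 2 * p i ^ 2 else 0) =
      ∑ i : Fin (n+1), 2 * p i ^ 2 := by
    apply Finset.sum_congr rfl
    intro i _
    rw [Finset.sum_ite_eq]
    simp
  have hS2 : ∑ i : Fin (n+1), ∑ j : Fin (n+1),
      (if (i : ℕ) + 1 = (j : ℕ) then -(p i * p j) else 0) =
      ∑ k : Fin n, -(p k.castSucc * p k.succ) :=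
    shift1 n (fun i j => -(p i * p j))
  have hS3 : ∑ i : Fin (n+1), ∑ j : Fin (n+1),
      (if (j : ℕ) + 1 = (i : ℕ) then -(p i * p j) else 0) =
      ∑ k : Fin n, -(p k.succ * p k.castSucc) := by
    rw [Finset.sum_comm]
    exact shift1 n (fun j i => -(p i * p j))
  rw [hS1, hS2, hS3]
  have expand : ∑ k : Fin n, (p k.castSucc - p k.succ) ^ 2 =
      ∑ k : Fin n, ((p k.castSucc) ^ 2 + (p k.succ) ^ 2 - 2 * (p k.castSucc * p k.succ)) :=
    Finset.sum_congr rfl fun k _ => by ring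
  have h1 : ∑ i : Fin (n+1), p i ^ 2 = (∑ k : Fin n, (p k.castSucc) ^ 2) + p (Fin.last n) ^ 2 :=
    Fin.sum_univ_castSucc _
  have h2 : ∑ i : Fin (n+1), p i ^ 2 = p 0 ^ 2 + ∑ k : Fin n, (p k.succ) ^ 2 :=
    Fin.sum_univ_succ _
  have h3 : ∑ i : Fin (n+1), 2 * p i ^ 2 = 2 * ∑ i : Fin (n+1), p i ^ 2 := by
    rw [Finset.mul_sum]
  have h4 : ∑ k : Fin n, ((p k.castSucc) ^ 2 + (p k.succ) ^ 2 - 2 * (p k.castSucc * p k.succ)) =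
      (∑ k : Fin n, (p k.castSucc) ^ 2) + (∑ k : Fin n, (p k.succ) ^ 2) -
        2 * ∑ k : Fin n, p k.castSucc * p k.succ := by
    rw [Finset.sum_sub_distrib, Finset.sum_add_distrib, Finset.mul_sum]
  have h5 : ∑ k : Fin n, -(p k.castSucc * p k.succ) = -∑ k : Fin n, p k.castSucc * p k.succ := by
    rw [Finset.sum_neg_distrib]
  have h6 : ∑ k : Fin n, -(p k.succ * p k.castSucc) = -∑ k : Fin n, p k.castSucc * p k.succ := by
    rw [← h5]
    exact Finset.sum_congr rfl fun k _ => by ring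
  rw [expand]
  linarith [h1, h2, h3, h4, h5, h6]
end

section
/- Let N ≥ 2 and let M be the (N-1)×(N-1) real symmetric tridiagonal matrix with diagonal entries 2j(N-j) and off-diagonal entries -√(j(j+1)(N-j)(N-j-1)). Then M is positive definite. -/
open Matrix Finset

set_option linter.unnecessarySeqFocus false

lemma split_tridiag {n : ℕ} (f : Fin (n+1) → Fin (n+1) → ℝ)
    (h0 : ∀ i j : Fin (n+1), (i:ℕ) ≠ (j:ℕ) → (i:ℕ)+1 ≠ (j:ℕ) → (j:ℕ)+1 ≠ (i:ℕ) → f i j = 0) :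
    ∑ i, ∑ j, f i j
      = ∑ i, f i i + ∑ k : Fin n, f k.castSucc k.succ + ∑ k : Fin n, f k.succ k.castSucc := by
  classical
  have hprod : ∑ i, ∑ j, f i j
      = ∑ p ∈ (univ ×ˢ univ : Finset (Fin (n+1) × Fin (n+1))), f p.1 p.2 := by
    rw [Finset.sum_product]
  set D : Finset (Fin (n+1) × Fin (n+1)) := univ.image (fun i => (i, i)) with hD
  set U : Finset (Fin (n+1) × Fin (n+1)) :=
    univ.image (fun k : Fin n => (k.castSucc, k.succ)) with hU
  set L : Finset (Fin (n+1) × Fin (n+1)) :=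
    univ.image (fun k : Fin n => (k.succ, k.castSucc)) with hL
  have hmemD : ∀ p : Fin (n+1) × Fin (n+1), p ∈ D ↔ p.1 = p.2 := by
    intro p
    simp only [hD, Finset.mem_image, Finset.mem_univ, true_and]
    constructor
    · rintro ⟨i, hi⟩; rw [← hi]
    · intro h; exact ⟨p.1, by simp [Prod.ext_iff, h]⟩
  have hmemU : ∀ p : Fin (n+1) × Fin (n+1), p ∈ U ↔ (p.1:ℕ) + 1 = (p.2:ℕ) := by
    intro p
    simp only [hU, Finset.mem_image, Finset.mem_univ, true_and]
    constructor
    · rintro ⟨k, hk⟩; rw [← hk]; simp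
    · intro h
      have hlt : (p.1:ℕ) < n := by omega
      refine ⟨⟨p.1, hlt⟩, ?_⟩
      ext <;> simp <;> omega
  have hmemL : ∀ p : Fin (n+1) × Fin (n+1), p ∈ L ↔ (p.2:ℕ) + 1 = (p.1:ℕ) := by
    intro p
    simp only [hL, Finset.mem_image, Finset.mem_univ, true_and]
    constructor
    · rintro ⟨k, hk⟩; rw [← hk]; simp
    · intro h
      have hlt : (p.2:ℕ) < n := by omega
      refine ⟨⟨p.2, hlt⟩, ?_⟩
      ext <;> simp <;> omega
  have hsub : D ∪ U ∪ L ⊆ univ ×ˢ univ := by intro p _; simp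
  have hrest : ∀ p ∈ (univ ×ˢ univ : Finset (Fin (n+1) × Fin (n+1))),
      p ∉ D ∪ U ∪ L → f p.1 p.2 = 0 := by
    intro p _ hp
    simp only [Finset.mem_union, not_or] at hp
    obtain ⟨⟨hpD, hpU⟩, hpL⟩ := hp
    refine h0 p.1 p.2 ?_ ?_ ?_
    · intro h; exact hpD ((hmemD p).mpr (Fin.ext h))
    · intro h; exact hpU ((hmemU p).mpr h)
    · intro h; exact hpL ((hmemL p).mpr h)
  have hDU : Disjoint D (U ∪ L) := by
    rw [Finset.disjoint_left]
    intro p hp hp'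
    rw [hmemD] at hp
    rcases Finset.mem_union.mp hp' with h | h
    · rw [hmemU] at h; rw [hp] at h; omega
    · rw [hmemL] at h; rw [hp] at h; omega
  have hUL : Disjoint U L := by
    rw [Finset.disjoint_left]
    intro p hpU hpL
    rw [hmemU] at hpU; rw [hmemL] at hpL; omega
  have hDinj : ∀ x ∈ (univ : Finset (Fin (n+1))), ∀ y ∈ univ,
      (fun i => (i, i)) x = (fun i => (i, i)) y → x = y := by
    intro a _ b _ h; simpa [Prod.ext_iff] using h
  have hUinj : ∀ x ∈ (univ : Finset (Fin n)), ∀ y ∈ univ,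
      (fun k : Fin n => (k.castSucc, k.succ)) x = (fun k : Fin n => (k.castSucc, k.succ)) y → x = y := by
    intro a _ b _ h; rw [Prod.ext_iff] at h; exact Fin.castSucc_injective _ h.1
  have hLinj : ∀ x ∈ (univ : Finset (Fin n)), ∀ y ∈ univ,
      (fun k : Fin n => (k.succ, k.castSucc)) x = (fun k : Fin n => (k.succ, k.castSucc)) y → x = y := by
    intro a _ b _ h; rw [Prod.ext_iff] at h; exact Fin.succ_injective _ h.1
  rw [hprod, ← Finset.sum_subset hsub hrest, Finset.union_assoc, Finset.sum_union hDU,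
    Finset.sum_union hUL, hD, hU, hL, Finset.sum_image hDinj, Finset.sum_image hUinj,
    Finset.sum_image hLinj]
  dsimp only
  ring

/-- the su(N) linearization matrix is positive definite
(with N = n + 2, so the matrix is (N-1)×(N-1) = (n+1)×(n+1), indices shifted by one). -/
theorem stmt1 (n N : ℕ) (hN : N = n + 2)
    (M : Matrix (Fin (n+1)) (Fin (n+1)) ℝ)
    (hdiag : ∀ i : Fin (n+1), M i i = 2 * ((i : ℝ) + 1) * ((N : ℝ) - (i : ℝ) - 1))
    (hoff1 : ∀ i : Fin n, M i.castSucc i.succ =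
      -Real.sqrt (((i : ℝ) + 1) * ((i : ℝ) + 2) * ((N : ℝ) - (i : ℝ) - 1) * ((N : ℝ) - (i : ℝ) - 2)))
    (hoff2 : ∀ i : Fin n, M i.succ i.castSucc =
      -Real.sqrt (((i : ℝ) + 1) * ((i : ℝ) + 2) * ((N : ℝ) - (i : ℝ) - 1) * ((N : ℝ) - (i : ℝ) - 2)))
    (hzero : ∀ i j : Fin (n+1), (i : ℕ) ≠ (j : ℕ) → (i : ℕ) + 1 ≠ (j : ℕ) →
      (j : ℕ) + 1 ≠ (i : ℕ) → M i j = 0) :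
    ∀ q : Fin (n+1) → ℝ, q ≠ 0 → 0 < q ⬝ᵥ M.mulVec q := by
  intro q hq
  have hNR : (N:ℝ) = (n:ℝ) + 2 := by rw [hN]; push_cast; ring
  set c : Fin (n+1) → ℝ := fun i => Real.sqrt (((i:ℝ)+1) * ((N:ℝ) - (i:ℝ) - 1)) with hc
  have hfac : ∀ i : Fin (n+1), (0:ℝ) < ((i:ℝ)+1) * ((N:ℝ) - (i:ℝ) - 1) := by
    intro i
    have hi : (i:ℝ) ≤ (n:ℝ) := by exact_mod_cast Nat.le_of_lt_succ i.isLt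
    have hi0 : (0:ℝ) ≤ (i:ℝ) := Nat.cast_nonneg _
    nlinarith [hNR]
  have hcpos : ∀ i : Fin (n+1), 0 < c i := fun i => Real.sqrt_pos.mpr (hfac i)
  have hcsq : ∀ i : Fin (n+1), c i * c i = ((i:ℝ)+1) * ((N:ℝ) - (i:ℝ) - 1) := fun i =>
    Real.mul_self_sqrt (le_of_lt (hfac i))
  set a : Fin (n+1) → ℝ := fun i => c i * q i with ha
  -- coe facts
  have hcastval : ∀ k : Fin n, ((k.castSucc : Fin (n+1)) : ℝ) = (k:ℝ) := by
    intro k; norm_cast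
  have hsuccval : ∀ k : Fin n, ((k.succ : Fin (n+1)) : ℝ) = (k:ℝ) + 1 := by
    intro k; rw [Fin.val_succ]; push_cast; ring
  -- off-diagonal factorization
  have hoffc : ∀ k : Fin n,
      Real.sqrt (((k:ℝ)+1) * ((k:ℝ)+2) * ((N:ℝ) - (k:ℝ) - 1) * ((N:ℝ) - (k:ℝ) - 2))
        = c k.castSucc * c k.succ := by
    intro k
    have hA : (0:ℝ) ≤ ((k:ℝ)+1) * ((N:ℝ) - (k:ℝ) - 1) := by
      have := hfac k.castSucc; rw [hcastval k] at this; linarith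
    have harg : ((k:ℝ)+1) * ((k:ℝ)+2) * ((N:ℝ) - (k:ℝ) - 1) * ((N:ℝ) - (k:ℝ) - 2)
        = (((k:ℝ)+1) * ((N:ℝ) - (k:ℝ) - 1)) * ((((k:ℝ)+1)+1) * ((N:ℝ) - ((k:ℝ)+1) - 1)) := by
      ring
    have h1 : c k.castSucc = Real.sqrt (((k:ℝ)+1) * ((N:ℝ) - (k:ℝ) - 1)) := by
      simp only [hc]; rw [hcastval k]
    have h2 : c k.succ = Real.sqrt ((((k:ℝ)+1)+1) * ((N:ℝ) - ((k:ℝ)+1) - 1)) := by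
      simp only [hc]; rw [hsuccval k]
    rw [harg, Real.sqrt_mul hA, h1, h2]
  -- the quadratic form as a double sum
  have hdouble : q ⬝ᵥ M.mulVec q = ∑ i, ∑ j, q i * M i j * q j := by
    simp only [dotProduct, mulVec, Finset.mul_sum]
    exact Finset.sum_congr rfl fun i _ => Finset.sum_congr rfl fun j _ => by ring
  have hz : ∀ i j : Fin (n+1), (i:ℕ) ≠ (j:ℕ) → (i:ℕ)+1 ≠ (j:ℕ) → (j:ℕ)+1 ≠ (i:ℕ) →
      q i * M i j * q j = 0 := by
    intro i j h1 h2 h3; rw [hzero i j h1 h2 h3]; ring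
  have hsplit := split_tridiag (fun i j => q i * M i j * q j) hz
  -- evaluate each piece
  have hdiag' : ∑ i, q i * M i i * q i = ∑ i, 2 * a i ^ 2 := by
    refine Finset.sum_congr rfl fun i _ => ?_
    rw [hdiag i]
    simp only [ha]
    linear_combination (-2 * q i ^ 2) * hcsq i
  have hup : ∑ k : Fin n, q k.castSucc * M k.castSucc k.succ * q k.succ
      = ∑ k : Fin n, -(a k.castSucc * a k.succ) := by
    refine Finset.sum_congr rfl fun k _ => ?_
    rw [hoff1 k, hoffc k, ha]; ring
  have hlow : ∑ k : Fin n, q k.succ * M k.succ k.castSucc * q k.castSucc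
      = ∑ k : Fin n, -(a k.castSucc * a k.succ) := by
    refine Finset.sum_congr rfl fun k _ => ?_
    rw [hoff2 k, hoffc k, ha]; ring
  have hform : q ⬝ᵥ M.mulVec q
      = a 0 ^ 2 + a (Fin.last n) ^ 2 + ∑ k : Fin n, (a k.castSucc - a k.succ) ^ 2 := by
    rw [hdouble, hsplit, hdiag', hup, hlow]
    have e1 : ∑ i, 2 * a i ^ 2 = (∑ i, a i ^ 2) + (∑ i, a i ^ 2) := by
      rw [← Finset.sum_add_distrib]; exact Finset.sum_congr rfl fun i _ => by ring
    have e2 : ∑ i, a i ^ 2 = a 0 ^ 2 + ∑ k : Fin n, a k.succ ^ 2 :=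
      Fin.sum_univ_succ (fun i => a i ^ 2)
    have e3 : ∑ i, a i ^ 2 = (∑ k : Fin n, a k.castSucc ^ 2) + a (Fin.last n) ^ 2 :=
      Fin.sum_univ_castSucc (fun i => a i ^ 2)
    have e4 : ∑ k : Fin n, (a k.castSucc - a k.succ) ^ 2
        = ∑ k : Fin n, (a k.castSucc ^ 2 + a k.succ ^ 2 + 2 * -(a k.castSucc * a k.succ)) := by
      exact Finset.sum_congr rfl fun k _ => by ring
    rw [e1]; nth_rewrite 1 [e2]; rw [e3, e4]
    rw [Finset.sum_add_distrib, Finset.sum_add_distrib, ← Finset.mul_sum]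
    ring
  rw [hform]
  -- positivity
  rcases Function.ne_iff.mp hq with ⟨i0, hi0⟩
  by_contra hle
  push_neg at hle
  have hsumnn : (0:ℝ) ≤ ∑ k : Fin n, (a k.castSucc - a k.succ) ^ 2 :=
    Finset.sum_nonneg fun k _ => sq_nonneg _
  have h0 : a 0 ^ 2 + a (Fin.last n) ^ 2 + ∑ k : Fin n, (a k.castSucc - a k.succ) ^ 2 = 0 := by
    nlinarith [sq_nonneg (a 0), sq_nonneg (a (Fin.last n))]
  have ha0 : a 0 = 0 := by
    have hsq : a 0 ^ 2 = 0 := by nlinarith [sq_nonneg (a (Fin.last n))]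
    exact sq_eq_zero_iff.mp hsq
  have hsum0 : ∑ k : Fin n, (a k.castSucc - a k.succ) ^ 2 = 0 := by
    nlinarith [sq_nonneg (a 0), sq_nonneg (a (Fin.last n))]
  have hdiff : ∀ k : Fin n, a k.castSucc = a k.succ := by
    intro k
    have := (Finset.sum_eq_zero_iff_of_nonneg (fun k _ => sq_nonneg
      (a k.castSucc - a k.succ))).mp hsum0 k (Finset.mem_univ k)
    have h2 := sq_eq_zero_iff.mp this
    linarith [sub_eq_zero.mp h2]
  have hazero : ∀ i : Fin (n+1), a i = 0 := by
    intro i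
    induction i using Fin.induction with
    | zero => exact ha0
    | succ k ih => rw [← hdiff k]; exact ih
  have : q i0 = 0 := by
    have := hazero i0
    rw [ha] at this
    exact (mul_eq_zero.mp this).resolve_left (ne_of_gt (hcpos i0))
  exact hi0 (by simpa using this)
end

section
/- Fix an integer N ≥ 2. Suppose nonnegative reals N_1,…,N_{N-1} satisfy N_j ≥ 1 + (N_{j+1} + N_{j-1})/2 for all j = 1,…,N-1, where N_0 = N_N = 0. Then N_j ≥ j(N-j) for all j. -/
/-- if nonnegative reals N_1,…,N_{N-1} (with N_0 = N_N = 0) satisfy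
N_j ≥ 1 + (N_{j+1} + N_{j-1})/2, then N_j ≥ j(N-j). -/
theorem stmt4 (N : ℕ) (hN : 2 ≤ N) (v : ℕ → ℝ)
    (h0 : v 0 = 0) (hNN : v N = 0)
    (hnonneg : ∀ j, 1 ≤ j → j ≤ N - 1 → 0 ≤ v j)
    (hineq : ∀ j, 1 ≤ j → j ≤ N - 1 → 1 + (v (j+1) + v (j-1))/2 ≤ v j) :
    ∀ j, 1 ≤ j → j ≤ N - 1 → (j : ℝ) * ((N : ℝ) - (j : ℝ)) ≤ v j := by
  have key : ∀ j, 1 ≤ j → j ≤ N - 1 →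
      ((j:ℝ)+1)*(j:ℝ) + (j:ℝ) * v (j+1) ≤ ((j:ℝ)+1) * v j := by
    intro j hj
    induction j, hj using Nat.le_induction with
    | base =>
      intro hle
      have h := hineq 1 le_rfl hle
      simp only [h0] at h
      push_cast
      norm_num at h ⊢
      linarith
    | succ n hn ih =>
      intro hle
      have ih' := ih (by omega)
      have h := hineq (n+1) (by omega) hle
      simp only [Nat.add_sub_cancel] at h
      push_cast at ih' ⊢
      nlinarith [ih', h]
  have key2 : ∀ k j, j + k = N - 1 → 1 ≤ j → (j:ℝ) * ((N:ℝ) - (j:ℝ)) ≤ v j := by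
    intro k
    induction k with
    | zero =>
      intro j hj hj1
      have hjN : j + 1 = N := by omega
      have hk := key j hj1 (by omega)
      rw [hjN, hNN] at hk
      have hNc : (N:ℝ) = (j:ℝ) + 1 := by exact_mod_cast congrArg (Nat.cast (R := ℝ)) hjN.symm
      rw [hNc]
      nlinarith [hk]
    | succ k ih =>
      intro j hj hj1
      have hk := key j hj1 (by omega)
      have ih' := ih (j+1) (by omega) (by omega)
      push_cast at ih'
      nlinarith [hk, ih']
  intro j h1 h2
  exact key2 (N - 1 - j) j (by omega) h1
end
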